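/- In the steady state of the self-regulating gene model, E[N] = P{A=0}(1 + λ̃/μ) + P{A=1}·λ/μ, where N is the total protein number and A the gene state. -/

import Mathlib

/-- First moment in the steady state:
`E[N] = P{A=0}(1 + λ̃/μ) + P{A=1} λ/μ`. -/
theorem stmt9 (lam lamt μ θ ψ : ℝ) (hlam : 0 < lam) (hμ : 0 < μ) (hθ : 0 < θ)
    (hψ : 0 < ψ) (hlamt : 0 ≤ lamt)
    (π1 π0 : ℕ → ℝ)
    (hnonneg : ∀ n, 0 ≤ π1 n ∧ 0 ≤ π0 n)
    (h00 : π0 0 = 0)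
    (htotal : (∑' n, π1 n) + (∑' n, π0 n) = 1)
    (hmom1 : ∀ k : ℕ, Summable (fun n : ℕ => (n : ℝ) ^ k * π1 n))
    (hmom0 : ∀ k : ℕ, Summable (fun n : ℕ => (n : ℝ) ^ k * π0 n))
    (hboundary : π1 0 * lam = π1 1 * μ + π0 0 * θ)
    (hmaster1 : ∀ n : ℕ, 1 ≤ n →
        π1 n * (n * (ψ + μ) + lam)
          = π1 (n - 1) * lam + π1 (n + 1) * (n + 1) * μ + π0 n * θ)
    (hmaster0 : ∀ n : ℕ, 1 ≤ n →
        π0 n * (((n : ℝ) - 1) * μ + θ + lamt)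
          = π0 (n - 1) * lamt + π0 (n + 1) * n * μ + π1 n * ψ * n) :
    ∑' n : ℕ, (n : ℝ) * (π1 n + π0 n)
      = (∑' n, π0 n) * (1 + lamt / μ) + (∑' n, π1 n) * (lam / μ) := by
  -- summabilities
  have s1 : Summable (fun n : ℕ => (n:ℝ) * π1 n) := by simpa using hmom1 1
  have s0 : Summable (fun n : ℕ => (n:ℝ) * π0 n) := by simpa using hmom0 1
  have p1 : Summable π1 := by simpa using hmom1 0
  have p0 : Summable π0 := by simpa using hmom0 0
  -- flux balance, by induction on n
  have key : ∀ n : ℕ,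
      μ * (((n:ℝ)+1) * π1 (n+1) + (n:ℝ) * π0 (n+1)) = lam * π1 n + lamt * π0 n := by
    intro n
    induction n with
    | zero =>
      simp only [Nat.cast_zero, h00]
      nlinarith [hboundary]
    | succ n ih =>
      have h1 := hmaster1 (n+1) (by omega)
      have h0 := hmaster0 (n+1) (by omega)
      simp only [Nat.add_sub_cancel] at h1 h0
      push_cast at h1 h0 ⊢
      linear_combination ih - h1 - h0
  -- shifted summabilities
  have s1' : Summable (fun n : ℕ => ((n:ℝ)+1) * π1 (n+1)) := by
    have := (summable_nat_add_iff 1).mpr s1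
    simpa [Nat.cast_add] using this
  have s0' : Summable (fun n : ℕ => (n:ℝ) * π0 (n+1)) := by
    have h := ((summable_nat_add_iff 1).mpr s0).sub ((summable_nat_add_iff 1).mpr p0)
    refine h.congr fun n => ?_
    push_cast; ring
  -- sum the flux balance
  have e1 : ∑' n : ℕ, ((n:ℝ)+1) * π1 (n+1) = ∑' n : ℕ, (n:ℝ) * π1 n := by
    rw [Summable.tsum_eq_zero_add s1]
    push_cast
    simp
  have sd : Summable (fun n : ℕ => (n:ℝ) * π0 n - π0 n) := s0.sub p0
  have e0 : ∑' n : ℕ, (n:ℝ) * π0 (n+1)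
      = (∑' n : ℕ, (n:ℝ) * π0 n) - ∑' n : ℕ, π0 n := by
    rw [← Summable.tsum_sub s0 p0, Summable.tsum_eq_zero_add sd, h00]
    push_cast
    rw [show (0:ℝ) * 0 - 0 + ∑' n : ℕ, (((n:ℝ)+1) * π0 (n+1) - π0 (n+1))
        = ∑' n : ℕ, (((n:ℝ)+1) * π0 (n+1) - π0 (n+1)) by ring]
    exact (tsum_congr fun n => by ring).symm
  have hsum : μ * ((∑' n : ℕ, (n:ℝ) * π1 n)
        + ((∑' n : ℕ, (n:ℝ) * π0 n) - ∑' n : ℕ, π0 n))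
      = lam * (∑' n, π1 n) + lamt * (∑' n, π0 n) := by
    have := tsum_congr (L := SummationFilter.unconditional ℕ) key
    rw [tsum_mul_left, Summable.tsum_add s1' s0', e1, e0] at this
    rw [this, Summable.tsum_add (p1.mul_left lam) (p0.mul_left lamt),
      tsum_mul_left, tsum_mul_left]
  have egoal : ∑' n : ℕ, (n : ℝ) * (π1 n + π0 n)
      = (∑' n : ℕ, (n:ℝ) * π1 n) + ∑' n : ℕ, (n:ℝ) * π0 n := by
    rw [← Summable.tsum_add s1 s0]
    exact tsum_congr fun n => by ring
  rw [egoal]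
  have hμ' : μ ≠ 0 := hμ.ne'
  field_simp
  linarith [hsum]
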